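/- Under the sensor setup, posterior definitions, and network setup: (1) for any fixed nonnegative weights a_1,…,a_N, if Φ^{ts} ⪰ 0 then Σ^t ⪰ Σ; (2) there exists a sequence (ε^{(L)})_{L≥1} of nonpositive real numbers with ε^{(L)} → 0 as L → ∞ such that Σ^{t(L)} − Σ^{(L)} ⪰ ε^{(L)}·I for every L ≥ 1, where the superscript (L) indicates the quantity computed with the fusion weights a_j^{(L)} = N·[𝓛^L]_{ij}. (Theorem 2 of the paper.) -/

import Mathlib

open Matrix Filter

private lemma osc_contract {N : ℕ} (hNe : (Finset.univ : Finset (Fin N)).Nonempty)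
    (A : Matrix (Fin N) (Fin N) ℝ) (δ : ℝ)
    (hA : ∀ p q, δ ≤ A p q) (hrowA : ∀ p, ∑ q, A p q = 1) (u : Fin N → ℝ) :
    Finset.univ.sup' hNe (A *ᵥ u) - Finset.univ.inf' hNe (A *ᵥ u)
      ≤ (1 - N * δ) * (Finset.univ.sup' hNe u - Finset.univ.inf' hNe u) := by
  set Mx := Finset.univ.sup' hNe u with hMx
  set mn := Finset.univ.inf' hNe u with hmn
  have hsum : ∀ p, ∑ r, (A p r - δ) = 1 - N * δ := by
    intro p
    rw [Finset.sum_sub_distrib, hrowA p, Finset.sum_const, Finset.card_univ, Fintype.card_fin,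
      nsmul_eq_mul]
  have key : ∀ p, (A *ᵥ u) p = (∑ r, (A p r - δ) * u r) + δ * ∑ r, u r := by
    intro p
    simp only [mulVec, dotProduct, sub_mul, Finset.sum_sub_distrib, Finset.mul_sum]
    ring
  have h1 : ∀ p, (A *ᵥ u) p ≤ (1 - N * δ) * Mx + δ * ∑ r, u r := by
    intro p
    rw [key p]
    have h0 : ∑ r, (A p r - δ) * u r ≤ ∑ r, (A p r - δ) * Mx := by
      refine Finset.sum_le_sum fun r _ => ?_
      exact mul_le_mul_of_nonneg_left (Finset.le_sup' u (Finset.mem_univ r))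
        (sub_nonneg.2 (hA p r))
    have h2 : ∑ r, (A p r - δ) * Mx = (1 - N * δ) * Mx := by
      rw [← Finset.sum_mul, hsum]
    linarith
  have h2 : ∀ p, (1 - N * δ) * mn + δ * ∑ r, u r ≤ (A *ᵥ u) p := by
    intro p
    rw [key p]
    have h0 : ∑ r, (A p r - δ) * mn ≤ ∑ r, (A p r - δ) * u r := by
      refine Finset.sum_le_sum fun r _ => ?_
      exact mul_le_mul_of_nonneg_left (Finset.inf'_le u (Finset.mem_univ r))
        (sub_nonneg.2 (hA p r))
    have h3 : ∑ r, (A p r - δ) * mn = (1 - N * δ) * mn := by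
      rw [← Finset.sum_mul, hsum]
    linarith
  have hs : Finset.univ.sup' hNe (A *ᵥ u) ≤ (1 - N * δ) * Mx + δ * ∑ r, u r :=
    Finset.sup'_le hNe _ fun p _ => h1 p
  have hi : (1 - N * δ) * mn + δ * ∑ r, u r ≤ Finset.univ.inf' hNe (A *ᵥ u) :=
    Finset.le_inf' hNe _ fun p _ => h2 p
  nlinarith [hs, hi]

private lemma stoch_conv {N : ℕ} (hN : 1 ≤ N) (W : Matrix (Fin N) (Fin N) ℝ)
    (hnonneg : ∀ p q, 0 ≤ W p q)
    (hrow : ∀ p, ∑ q, W p q = 1)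
    (hcol : ∀ q, ∑ p, W p q = 1)
    (hdiag : ∀ p, 0 < W p p)
    (hconn : ∀ p q, ∃ m : ℕ, 0 < (W ^ m) p q)
    (i j : Fin N) :
    Tendsto (fun L : ℕ => (N : ℝ) * (W ^ L) i j) atTop (nhds 1) := by
  have hNe : (Finset.univ : Finset (Fin N)).Nonempty := ⟨⟨0, hN⟩, Finset.mem_univ _⟩
  have hpnn : ∀ L p q, 0 ≤ (W ^ L) p q := by
    intro L
    induction L with
    | zero => intro p q; by_cases h : p = q <;> simp [pow_zero, Matrix.one_apply, h]
    | succ L ih =>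
      intro p q
      rw [pow_succ, Matrix.mul_apply]
      exact Finset.sum_nonneg fun r _ => mul_nonneg (ih p r) (hnonneg r q)
  have hprow : ∀ L p, ∑ q, (W ^ L) p q = 1 := by
    intro L
    induction L with
    | zero => intro p; simp [pow_zero, Matrix.one_apply]
    | succ L ih =>
      intro p
      simp only [pow_succ, Matrix.mul_apply]
      rw [Finset.sum_comm]
      simp_rw [← Finset.mul_sum, hrow, mul_one]
      exact ih p
  have hpcol : ∀ L q, ∑ p, (W ^ L) p q = 1 := by
    intro L
    induction L with
    | zero => intro q; simp [pow_zero, Matrix.one_apply]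
    | succ L ih =>
      intro q
      simp only [pow_succ, Matrix.mul_apply]
      rw [Finset.sum_comm]
      simp_rw [← Finset.sum_mul, ih, one_mul]
      exact hcol q
  have hstep : ∀ k (p q : Fin N), 0 < (W ^ k) p q → 0 < (W ^ (k + 1)) p q := by
    intro k p q h
    rw [pow_succ, Matrix.mul_apply]
    have hle : (W ^ k) p q * W q q ≤ ∑ r, (W ^ k) p r * W r q :=
      Finset.single_le_sum (fun r _ => mul_nonneg (hpnn k p r) (hnonneg r q))
        (Finset.mem_univ q)
    exact lt_of_lt_of_le (mul_pos h (hdiag q)) hle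
  have hup : ∀ (p q : Fin N) (k k' : ℕ), k ≤ k' → 0 < (W ^ k) p q → 0 < (W ^ k') p q := by
    intro p q k k' hk h
    induction k', hk using Nat.le_induction with
    | base => exact h
    | succ k' _ ih => exact hstep k' p q ih
  obtain ⟨m, hm0, hm⟩ : ∃ m : ℕ, 0 < m ∧ ∀ p q, 0 < (W ^ m) p q := by
    choose f hf using hconn
    refine ⟨(Finset.univ.sup fun pq : Fin N × Fin N => f pq.1 pq.2) + 1, Nat.succ_pos _,
      fun p q => ?_⟩
    refine hup p q (f p q) _ ?_ (hf p q)
    exact le_trans (Finset.le_sup (f := fun pq : Fin N × Fin N => f pq.1 pq.2)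
      (Finset.mem_univ (p, q))) (Nat.le_succ _)
  have hNeP : (Finset.univ : Finset (Fin N × Fin N)).Nonempty :=
    ⟨(⟨0, hN⟩, ⟨0, hN⟩), Finset.mem_univ _⟩
  set δ : ℝ := Finset.univ.inf' hNeP (fun pq : Fin N × Fin N => (W ^ m) pq.1 pq.2) with hδdef
  have hδpos : 0 < δ := by
    rw [hδdef, Finset.lt_inf'_iff]
    exact fun pq _ => hm pq.1 pq.2
  have hδle : ∀ p q, δ ≤ (W ^ m) p q := fun p q =>
    Finset.inf'_le _ (Finset.mem_univ (p, q))
  set c : ℝ := 1 - N * δ with hcdef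
  have hc1 : c < 1 := by
    have : (0:ℝ) < N * δ := mul_pos (by exact_mod_cast hN) hδpos
    rw [hcdef]; linarith
  have hc0 : 0 ≤ c := by
    have h1 : (N : ℝ) * δ = ∑ _q : Fin N, δ := by
      rw [Finset.sum_const, Finset.card_univ, Fintype.card_fin, nsmul_eq_mul]
    have h2 : ∑ _q : Fin N, δ ≤ ∑ q, (W ^ m) ⟨0, hN⟩ q :=
      Finset.sum_le_sum fun q _ => hδle _ q
    rw [hprow m] at h2
    rw [hcdef, h1]; linarith
  set v : ℕ → Fin N → ℝ := fun L p => (W ^ L) p j with hvdef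
  set osc : ℕ → ℝ := fun L =>
    Finset.univ.sup' hNe (v L) - Finset.univ.inf' hNe (v L) with hoscdef
  have hvshift : ∀ K L, v (K + L) = (W ^ K) *ᵥ (v L) := by
    intro K L
    funext p
    simp only [hvdef, pow_add, Matrix.mul_apply, mulVec, dotProduct]
  have hosc_nonneg : ∀ L, 0 ≤ osc L := by
    intro L
    have := le_trans (Finset.inf'_le (v L) (Finset.mem_univ ⟨0, hN⟩))
      (Finset.le_sup' (v L) (Finset.mem_univ ⟨0, hN⟩))
    simp only [hoscdef]; linarith
  have hosc_anti : Antitone osc := by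
    refine antitone_nat_of_succ_le fun L => ?_
    have h := osc_contract hNe (W ^ 1) 0 (by simpa [pow_one] using fun p q => hnonneg p q)
      (by simpa [pow_one] using hrow) (v L)
    rw [← hvshift 1 L] at h
    simpa [hoscdef, Nat.add_comm] using h
  have hosc_geo : ∀ K, osc (K * m) ≤ c ^ K * osc 0 := by
    intro K
    induction K with
    | zero => simp
    | succ K ih =>
      have h := osc_contract hNe (W ^ m) δ hδle (hprow m) (v (K * m))
      rw [← hvshift m (K * m)] at h
      have hx : m + K * m = (K + 1) * m := by ring
      rw [hx] at h
      calc osc ((K + 1) * m) ≤ c * osc (K * m) := h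
        _ ≤ c * (c ^ K * osc 0) := mul_le_mul_of_nonneg_left ih hc0
        _ = c ^ (K + 1) * osc 0 := by ring
  have hosc_bound : ∀ L, osc L ≤ c ^ (L / m) * osc 0 := by
    intro L
    exact le_trans (hosc_anti (Nat.div_mul_le_self L m)) (hosc_geo (L / m))
  have hosc_tend : Tendsto osc atTop (nhds 0) := by
    have hdiv : Tendsto (fun L : ℕ => L / m) atTop atTop :=
      le_of_eq (map_div_atTop_eq_nat m hm0)
    have hpow : Tendsto (fun L : ℕ => c ^ (L / m) * osc 0) atTop (nhds 0) := by
      have := ((tendsto_pow_atTop_nhds_zero_of_lt_one hc0 hc1).comp hdiv).mul_const (osc 0)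
      simpa using this
    exact tendsto_of_tendsto_of_tendsto_of_le_of_le tendsto_const_nhds hpow
      hosc_nonneg hosc_bound
  -- each entry of column j is within osc of 1/N
  have hentry : ∀ L, |(W ^ L) i j - 1 / N| ≤ osc L := by
    intro L
    have hNpos : (0:ℝ) < N := by exact_mod_cast hN
    have h1 : (N:ℝ) * Finset.univ.inf' hNe (v L) ≤ 1 := by
      have : ∑ p, Finset.univ.inf' hNe (v L) ≤ ∑ p, v L p :=
        Finset.sum_le_sum fun p _ => Finset.inf'_le (v L) (Finset.mem_univ p)
      rw [Finset.sum_const, Finset.card_univ, Fintype.card_fin, nsmul_eq_mul] at this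
      simpa [hvdef, hpcol L j] using this
    have h2 : 1 ≤ (N:ℝ) * Finset.univ.sup' hNe (v L) := by
      have : ∑ p, v L p ≤ ∑ p, Finset.univ.sup' hNe (v L) :=
        Finset.sum_le_sum fun p _ => Finset.le_sup' (v L) (Finset.mem_univ p)
      rw [Finset.sum_const, Finset.card_univ, Fintype.card_fin, nsmul_eq_mul] at this
      simpa [hvdef, hpcol L j] using this
    have hmn : Finset.univ.inf' hNe (v L) ≤ 1 / N := by
      rw [le_div_iff₀ hNpos]; linarith [h1]
    have hMx : 1 / (N:ℝ) ≤ Finset.univ.sup' hNe (v L) := by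
      rw [div_le_iff₀ hNpos]; linarith [h2]
    have hv1 : (W ^ L) i j ≤ Finset.univ.sup' hNe (v L) :=
      Finset.le_sup' (v L) (Finset.mem_univ i)
    have hv2 : Finset.univ.inf' hNe (v L) ≤ (W ^ L) i j :=
      Finset.inf'_le (v L) (Finset.mem_univ i)
    rw [abs_le]
    constructor
    · simp only [hoscdef]; linarith
    · simp only [hoscdef]; linarith
  have hmain : Tendsto (fun L : ℕ => (W ^ L) i j - 1 / N) atTop (nhds 0) := by
    refine squeeze_zero_norm (fun L => ?_) hosc_tend
    simpa [Real.norm_eq_abs] using hentry L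
  have hNne : (N:ℝ) ≠ 0 := by positivity
  have h2 : Tendsto (fun L : ℕ => (N:ℝ) * ((W ^ L) i j - 1 / N) + 1) atTop (nhds ((N:ℝ) * 0 + 1)) :=
    (hmain.const_mul (N:ℝ)).add tendsto_const_nhds
  have hfeq : (fun L : ℕ => (N:ℝ) * ((W ^ L) i j - 1 / N) + 1)
      = fun L : ℕ => (N:ℝ) * (W ^ L) i j := by
    funext L
    field_simp
    ring
  rw [hfeq] at h2
  simpa using h2

private lemma rct {m k : Type*} [Fintype m] [Fintype k] (A : Matrix m k ℝ) : Aᴴ = Aᵀ := by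
  ext p q; simp [conjTranspose_apply]

private lemma psd_smul {k : Type*} [Fintype k] [DecidableEq k] {A : Matrix k k ℝ} {c : ℝ}
    (hc : 0 ≤ c) (hA : A.PosSemidef) : (c • A).PosSemidef := by
  have hherm : (c • A).IsHermitian := by
    refine Matrix.IsHermitian.ext fun p q => ?_
    simp only [Matrix.smul_apply, star_trivial, smul_eq_mul]
    rw [show A q p = A p q from (star_trivial (A p q)) ▸ hA.1.apply p q]
  refine PosSemidef.of_dotProduct_mulVec_nonneg hherm fun x => ?_
  rw [smul_mulVec, dotProduct_smul]
  exact mul_nonneg hc (hA.dotProduct_mulVec_nonneg x)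

private lemma psd_sum {n k : ℕ} (f : Fin k → Matrix (Fin n) (Fin n) ℝ)
    (h : ∀ j, (f j).PosSemidef) : (∑ j, f j).PosSemidef :=
  Finset.sum_induction f _ (fun _ _ ha hb => ha.add hb) Matrix.PosSemidef.zero fun j _ => h j

private lemma herm_sum {n k : ℕ} (f : Fin k → Matrix (Fin n) (Fin n) ℝ)
    (h : ∀ j, (f j).IsHermitian) : (∑ j, f j).IsHermitian :=
  Finset.sum_induction f _ (fun _ _ ha hb => ha.add hb) isHermitian_zero fun j _ => h j

private lemma herm_sandwich {m k : Type*} [Fintype m] [Fintype k] (B : Matrix m k ℝ)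
    {A : Matrix m m ℝ} (hA : A.IsHermitian) : (Bᵀ * A * B).IsHermitian := by
  rw [← rct]; exact isHermitian_conjTranspose_mul_mul B hA

-- the key algebraic identity and positivity (part 1)
private lemma part1 {n N : ℕ} {md : Fin N → ℕ}
    (H : ∀ j, Matrix (Fin (md j)) (Fin n) ℝ)
    (R Ru : ∀ j, Matrix (Fin (md j)) (Fin (md j)) ℝ)
    (hR : ∀ j, (R j).PosDef) (hRu : ∀ j, (Ru j).PosDef)
    (P Pf : Matrix (Fin n) (Fin n) ℝ) (hP : P.PosDef) (hPf : Pf.PosDef)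
    (a : Fin N → ℝ) (ha : ∀ j, 0 ≤ a j)
    (hts : (∑ j, ((a j) ^ 2 - a j) • ((H j)ᵀ * (Ru j)⁻¹ * R j * (Ru j)⁻¹ * H j)).PosSemidef) :
    ((((Pf⁻¹ + ∑ j, a j • ((H j)ᵀ * (Ru j)⁻¹ * H j))⁻¹) * Pf⁻¹ * P * Pf⁻¹ *
        ((Pf⁻¹ + ∑ j, a j • ((H j)ᵀ * (Ru j)⁻¹ * H j))⁻¹)
      + ((Pf⁻¹ + ∑ j, a j • ((H j)ᵀ * (Ru j)⁻¹ * H j))⁻¹) *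
          (∑ j, (a j) ^ 2 • ((H j)ᵀ * (Ru j)⁻¹ * R j * (Ru j)⁻¹ * H j)) *
          ((Pf⁻¹ + ∑ j, a j • ((H j)ᵀ * (Ru j)⁻¹ * H j))⁻¹)
      - (P⁻¹ + ∑ j, a j • ((H j)ᵀ * (R j)⁻¹ * H j))⁻¹)).PosSemidef := by
  -- notation
  set Φf : Matrix (Fin n) (Fin n) ℝ := ∑ j, a j • ((H j)ᵀ * (Ru j)⁻¹ * H j) with hΦf
  set Φ : Matrix (Fin n) (Fin n) ℝ := ∑ j, a j • ((H j)ᵀ * (R j)⁻¹ * H j) with hΦ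
  set Φt : Matrix (Fin n) (Fin n) ℝ :=
    ∑ j, (a j) ^ 2 • ((H j)ᵀ * (Ru j)⁻¹ * R j * (Ru j)⁻¹ * H j) with hΦt
  set Φts : Matrix (Fin n) (Fin n) ℝ :=
    ∑ j, ((a j) ^ 2 - a j) • ((H j)ᵀ * (Ru j)⁻¹ * R j * (Ru j)⁻¹ * H j) with hΦts
  set Ψ : Matrix (Fin n) (Fin n) ℝ :=
    ∑ j, a j • ((H j)ᵀ * (Ru j)⁻¹ * R j * (Ru j)⁻¹ * H j) with hΨ
  -- positivity facts
  have hΦfpsd : Φf.PosSemidef := by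
    refine psd_sum _ fun j => psd_smul (ha j) ?_
    have := ((hRu j).inv.posSemidef).conjTranspose_mul_mul_same (H j)
    rwa [rct] at this
  have hΦpsd : Φ.PosSemidef := by
    refine psd_sum _ fun j => psd_smul (ha j) ?_
    have := ((hR j).inv.posSemidef).conjTranspose_mul_mul_same (H j)
    rwa [rct] at this
  have hApd : (Pf⁻¹ + Φf).PosDef := hPf.inv.add_posSemidef hΦfpsd
  have hBpd : (P⁻¹ + Φ).PosDef := hP.inv.add_posSemidef hΦpsd
  set S : Matrix (Fin n) (Fin n) ℝ := (Pf⁻¹ + Φf)⁻¹ with hSdef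
  set T : Matrix (Fin n) (Fin n) ℝ := (P⁻¹ + Φ)⁻¹ with hTdef
  have hAdet : IsUnit (Pf⁻¹ + Φf).det := (Matrix.isUnit_iff_isUnit_det _).mp hApd.isUnit
  have hBdet : IsUnit (P⁻¹ + Φ).det := (Matrix.isUnit_iff_isUnit_det _).mp hBpd.isUnit
  have hPdet : IsUnit P.det := (Matrix.isUnit_iff_isUnit_det _).mp hP.isUnit
  have hRdet : ∀ j, IsUnit (R j).det := fun j => (Matrix.isUnit_iff_isUnit_det _).mp (hR j).isUnit
  have hS1 : S * (Pf⁻¹ + Φf) = 1 := Matrix.nonsing_inv_mul _ hAdet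
  have hS2 : (Pf⁻¹ + Φf) * S = 1 := Matrix.mul_nonsing_inv _ hAdet
  have hT1 : T * (P⁻¹ + Φ) = 1 := Matrix.nonsing_inv_mul _ hBdet
  have hSpd : S.PosDef := hApd.inv
  have hTpd : T.PosDef := hBpd.inv
  have hSh : Sᴴ = S := hSpd.isHermitian
  have hTh : Tᴴ = T := hTpd.isHermitian
  set E0 : Matrix (Fin n) (Fin n) ℝ := S * Pf⁻¹ - T * P⁻¹ with hE0def
  set E : ∀ j, Matrix (Fin n) (Fin (md j)) ℝ :=
    fun j => S * (H j)ᵀ * (Ru j)⁻¹ - T * (H j)ᵀ * (R j)⁻¹ with hEdef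
  -- transposes
  have hE0H : E0ᴴ = Pf⁻¹ * S - P⁻¹ * T := by
    simp only [hE0def, conjTranspose_sub, conjTranspose_mul, conjTranspose_nonsing_inv,
      hPf.isHermitian.eq, hP.isHermitian.eq, hSh, hTh]
  have hEH : ∀ j, (E j)ᴴ = (Ru j)⁻¹ * (H j * S) - (R j)⁻¹ * (H j * T) := by
    intro j
    simp only [hEdef, conjTranspose_sub, conjTranspose_mul, conjTranspose_nonsing_inv,
      (hRu j).isHermitian.eq, (hR j).isHermitian.eq, hSh, hTh, conjTranspose_conjTranspose,
      rct, transpose_transpose, Matrix.mul_assoc]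
  -- expansion of E0 * P * E0ᴴ
  have hPPinv : P * P⁻¹ = 1 := Matrix.mul_nonsing_inv _ hPdet
  have hPinvP : P⁻¹ * P = 1 := Matrix.nonsing_inv_mul _ hPdet
  have hE0exp : E0 * P * E0ᴴ =
      S * Pf⁻¹ * P * Pf⁻¹ * S - S * Pf⁻¹ * T - T * Pf⁻¹ * S + T * P⁻¹ * T := by
    rw [hE0H, hE0def]
    simp only [Matrix.sub_mul, Matrix.mul_sub, Matrix.mul_assoc,
      Matrix.mul_nonsing_inv_cancel_left (h := hPdet),
      Matrix.nonsing_inv_mul_cancel_left (h := hPdet)]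
    abel
  have hEexp : ∀ j, E j * R j * (E j)ᴴ =
      S * ((H j)ᵀ * (Ru j)⁻¹ * R j * ((Ru j)⁻¹ * H j)) * S
      - S * ((H j)ᵀ * ((Ru j)⁻¹ * H j)) * T
      - T * ((H j)ᵀ * ((Ru j)⁻¹ * H j)) * S
      + T * ((H j)ᵀ * ((R j)⁻¹ * H j)) * T := by
    intro j
    rw [hEH j, hEdef]
    simp only [Matrix.sub_mul, Matrix.mul_sub, Matrix.mul_assoc,
      Matrix.mul_nonsing_inv_cancel_left (h := hRdet j),
      Matrix.nonsing_inv_mul_cancel_left (h := hRdet j)]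
    abel
  have h1 : ∀ j, a j • (E j * R j * (E j)ᴴ) =
      S * (a j • ((H j)ᵀ * (Ru j)⁻¹ * R j * (Ru j)⁻¹ * H j)) * S
      - S * (a j • ((H j)ᵀ * (Ru j)⁻¹ * H j)) * T
      - T * (a j • ((H j)ᵀ * (Ru j)⁻¹ * H j)) * S
      + T * (a j • ((H j)ᵀ * (R j)⁻¹ * H j)) * T := by
    intro j
    rw [hEexp j]
    simp only [Matrix.mul_smul, Matrix.smul_mul, smul_sub, smul_add, Matrix.mul_assoc]
  have hsum : ∑ j, a j • (E j * R j * (E j)ᴴ) =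
      S * Ψ * S - S * Φf * T - T * Φf * S + T * Φ * T := by
    rw [Finset.sum_congr rfl fun j _ => h1 j]
    simp only [Finset.sum_add_distrib, Finset.sum_sub_distrib]
    simp only [← Finset.sum_mul, ← Finset.mul_sum]
    rfl
  have hΦtsplit : Φts = Φt - Ψ := by
    rw [hΦts, hΦt, hΨ, ← Finset.sum_sub_distrib]
    exact Finset.sum_congr rfl fun j _ => by rw [← sub_smul]
  have hA1 : S * Φf * T = T - S * Pf⁻¹ * T := by
    have h : (S * Pf⁻¹ + S * Φf) * T = T := by
      rw [← Matrix.mul_add, hS1, Matrix.one_mul]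
    rw [Matrix.add_mul] at h
    linear_combination (norm := abel) h
  have hA2 : T * Φf * S = T - T * Pf⁻¹ * S := by
    have h : T * ((Pf⁻¹ + Φf) * S) = T := by rw [hS2, Matrix.mul_one]
    rw [Matrix.add_mul, Matrix.mul_add, ← Matrix.mul_assoc, ← Matrix.mul_assoc] at h
    linear_combination (norm := abel) h
  have hA3 : T * Φ * T = T - T * P⁻¹ * T := by
    have h : (T * P⁻¹ + T * Φ) * T = T := by
      rw [← Matrix.mul_add, hT1, Matrix.one_mul]
    rw [Matrix.add_mul] at h
    linear_combination (norm := abel) h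
  have key : S * Pf⁻¹ * P * Pf⁻¹ * S + S * Φt * S - T =
      S * Φts * S + E0 * P * E0ᴴ + ∑ j, a j • (E j * R j * (E j)ᴴ) := by
    rw [hsum, hE0exp, hΦtsplit, Matrix.mul_sub, Matrix.sub_mul, hA1, hA2, hA3]
    abel
  have psd1 : (S * Φts * S).PosSemidef := by
    have h := hts.mul_mul_conjTranspose_same S
    rwa [hSh] at h
  have psd2 : (E0 * P * E0ᴴ).PosSemidef := hP.posSemidef.mul_mul_conjTranspose_same E0
  have psd3 : (∑ j, a j • (E j * R j * (E j)ᴴ)).PosSemidef :=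
    psd_sum _ fun j => psd_smul (ha j) ((hR j).posSemidef.mul_mul_conjTranspose_same (E j))
  have final := ((psd1.add psd2).add psd3)
  rw [← key] at final
  exact final

private lemma herm_smul {k : Type*} [Fintype k] {A : Matrix k k ℝ} (c : ℝ)
    (hA : A.IsHermitian) : (c • A).IsHermitian := by
  refine Matrix.IsHermitian.ext fun p q => ?_
  simp only [Matrix.smul_apply, star_trivial, smul_eq_mul]
  rw [show A q p = A p q from (star_trivial (A p q)) ▸ hA.apply p q]

private lemma hermAll {n N : ℕ} {md : Fin N → ℕ}
    (H : ∀ j, Matrix (Fin (md j)) (Fin n) ℝ)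
    (R Ru : ∀ j, Matrix (Fin (md j)) (Fin (md j)) ℝ)
    (hR : ∀ j, (R j).PosDef) (hRu : ∀ j, (Ru j).PosDef)
    (P Pf : Matrix (Fin n) (Fin n) ℝ) (hP : P.PosDef) (hPf : Pf.PosDef)
    (a : Fin N → ℝ) :
    ((((Pf⁻¹ + ∑ j, a j • ((H j)ᵀ * (Ru j)⁻¹ * H j))⁻¹) * Pf⁻¹ * P * Pf⁻¹ *
        ((Pf⁻¹ + ∑ j, a j • ((H j)ᵀ * (Ru j)⁻¹ * H j))⁻¹)
      + ((Pf⁻¹ + ∑ j, a j • ((H j)ᵀ * (Ru j)⁻¹ * H j))⁻¹) *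
          (∑ j, (a j) ^ 2 • ((H j)ᵀ * (Ru j)⁻¹ * R j * (Ru j)⁻¹ * H j)) *
          ((Pf⁻¹ + ∑ j, a j • ((H j)ᵀ * (Ru j)⁻¹ * H j))⁻¹)
      - (P⁻¹ + ∑ j, a j • ((H j)ᵀ * (R j)⁻¹ * H j))⁻¹)).IsHermitian := by
  set Φf : Matrix (Fin n) (Fin n) ℝ := ∑ j, a j • ((H j)ᵀ * (Ru j)⁻¹ * H j) with hΦf
  set Φ : Matrix (Fin n) (Fin n) ℝ := ∑ j, a j • ((H j)ᵀ * (R j)⁻¹ * H j) with hΦ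
  set Φt : Matrix (Fin n) (Fin n) ℝ :=
    ∑ j, (a j) ^ 2 • ((H j)ᵀ * (Ru j)⁻¹ * R j * (Ru j)⁻¹ * H j) with hΦt
  have hΦfh : Φf.IsHermitian := herm_sum _ fun j =>
    herm_smul _ (herm_sandwich (H j) (hRu j).inv.isHermitian)
  have hΦh : Φ.IsHermitian := herm_sum _ fun j =>
    herm_smul _ (herm_sandwich (H j) (hR j).inv.isHermitian)
  have hMth : ∀ j, ((H j)ᵀ * (Ru j)⁻¹ * R j * (Ru j)⁻¹ * H j).IsHermitian := by
    intro j
    show _ᴴ = _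
    simp only [conjTranspose_mul, conjTranspose_nonsing_inv, (hRu j).isHermitian.eq,
      (hR j).isHermitian.eq, rct, transpose_transpose, Matrix.mul_assoc]
  have hΦth : Φt.IsHermitian := herm_sum _ fun j => herm_smul _ (hMth j)
  set S : Matrix (Fin n) (Fin n) ℝ := (Pf⁻¹ + Φf)⁻¹ with hSdef
  set T : Matrix (Fin n) (Fin n) ℝ := (P⁻¹ + Φ)⁻¹ with hTdef
  have hSh : Sᴴ = S := by
    rw [hSdef, conjTranspose_nonsing_inv]
    congr 1
    rw [conjTranspose_add, conjTranspose_nonsing_inv, hPf.isHermitian.eq, hΦfh.eq]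
  have hTh : Tᴴ = T := by
    rw [hTdef, conjTranspose_nonsing_inv]
    congr 1
    rw [conjTranspose_add, conjTranspose_nonsing_inv, hP.isHermitian.eq, hΦh.eq]
  have herm1 : (S * Pf⁻¹ * P * Pf⁻¹ * S).IsHermitian := by
    show _ᴴ = _
    simp only [conjTranspose_mul, conjTranspose_nonsing_inv, hPf.isHermitian.eq,
      hP.isHermitian.eq, hSh, Matrix.mul_assoc]
  have herm2 : (S * Φt * S).IsHermitian := by
    show _ᴴ = _
    simp only [conjTranspose_mul, hSh, hΦth.eq, Matrix.mul_assoc]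
  have herm3 : T.IsHermitian := hTh
  exact (herm1.add herm2).sub herm3

private lemma psd_of_close {n : ℕ} (D1 Δ : Matrix (Fin n) (Fin n) ℝ)
    (hD1 : D1.PosSemidef) (hΔ : Δ.IsHermitian) :
    (D1 + Δ + (∑ p, ∑ q, |Δ p q|) • (1 : Matrix (Fin n) (Fin n) ℝ)).PosSemidef := by
  set s : ℝ := ∑ p, ∑ q, |Δ p q| with hsdef
  have hherm : (D1 + Δ + s • (1 : Matrix (Fin n) (Fin n) ℝ)).IsHermitian :=
    (hD1.1.add hΔ).add (herm_smul s isHermitian_one)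
  refine PosSemidef.of_dotProduct_mulVec_nonneg hherm fun x => ?_
  have hstar : star x = x := by funext p; simp
  rw [hstar, add_mulVec, add_mulVec, dotProduct_add, dotProduct_add, smul_mulVec,
    one_mulVec, dotProduct_smul, smul_eq_mul]
  have h1 : (0:ℝ) ≤ x ⬝ᵥ D1 *ᵥ x := by
    have := hD1.dotProduct_mulVec_nonneg x
    rwa [hstar] at this
  have hxx : ∀ p q, |x p * x q| ≤ x ⬝ᵥ x := by
    intro p q
    have hp : x p * x p ≤ x ⬝ᵥ x :=
      Finset.single_le_sum (f := fun r => x r * x r) (fun r _ => mul_self_nonneg _)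
        (Finset.mem_univ p)
    have hq : x q * x q ≤ x ⬝ᵥ x :=
      Finset.single_le_sum (f := fun r => x r * x r) (fun r _ => mul_self_nonneg _)
        (Finset.mem_univ q)
    have habs : |x p * x q| ≤ (x p * x p + x q * x q) / 2 := by
      rw [abs_mul]
      nlinarith [sq_nonneg (|x p| - |x q|), abs_mul_abs_self (x p), abs_mul_abs_self (x q)]
    linarith
  have h2 : -(s * (x ⬝ᵥ x)) ≤ x ⬝ᵥ Δ *ᵥ x := by
    have hterm : ∀ p q, -(|Δ p q| * (x ⬝ᵥ x)) ≤ x p * (Δ p q * x q) := by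
      intro p q
      have h3 : |x p * (Δ p q * x q)| ≤ |Δ p q| * (x ⬝ᵥ x) := by
        have : |x p * (Δ p q * x q)| = |Δ p q| * |x p * x q| := by
          rw [show x p * (Δ p q * x q) = Δ p q * (x p * x q) by ring, abs_mul]
        rw [this]
        exact mul_le_mul_of_nonneg_left (hxx p q) (abs_nonneg _)
      linarith [neg_abs_le (x p * (Δ p q * x q))]
    have : ∑ p, ∑ q, -(|Δ p q| * (x ⬝ᵥ x)) ≤ ∑ p, ∑ q, x p * (Δ p q * x q) :=
      Finset.sum_le_sum fun p _ => Finset.sum_le_sum fun q _ => hterm p q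
    calc -(s * (x ⬝ᵥ x)) = ∑ p, ∑ q, -(|Δ p q| * (x ⬝ᵥ x)) := by
          rw [hsdef]; simp [Finset.sum_neg_distrib, Finset.sum_mul]
      _ ≤ ∑ p, ∑ q, x p * (Δ p q * x q) := this
      _ = x ⬝ᵥ Δ *ᵥ x := by
          simp [dotProduct, mulVec, Finset.mul_sum]
  linarith

/-- Theorem 2 of the paper: (1) for any nonnegative fusion weights, if `Φᵗˢ ⪰ 0`
then `Σᵗ ⪰ Σ`; (2) there is a nonpositive sequence `ε^{(L)} → 0` with
`Σ^{t(L)} − Σ^{(L)} ⪰ ε^{(L)} I` for every `L ≥ 1`, where the superscript `(L)`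
uses the consensus weights `a_j^{(L)} = N [𝓛^L]_{ij}`. -/
theorem stmt10 {n N : ℕ} (hn : 1 ≤ n) (hN : 1 ≤ N)
    (md : Fin N → ℕ) (hmd : ∀ j, 1 ≤ md j)
    (H : ∀ j, Matrix (Fin (md j)) (Fin n) ℝ)
    (R Ru : ∀ j, Matrix (Fin (md j)) (Fin (md j)) ℝ)
    (hRsymm : ∀ j, (R j).IsSymm) (hRusymm : ∀ j, (Ru j).IsSymm)
    (hR : ∀ j, (R j).PosDef) (hRu : ∀ j, (Ru j).PosDef)
    (P dQ : Matrix (Fin n) (Fin n) ℝ) (hPsymm : P.IsSymm) (hP : P.PosDef)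
    (hdQsymm : dQ.IsSymm)
    (Pf : Matrix (Fin n) (Fin n) ℝ) (hPfdef : Pf = P + dQ) (hPf : Pf.PosDef)
    (W : Matrix (Fin N) (Fin N) ℝ)
    (hnonneg : ∀ p q, 0 ≤ W p q)
    (hrow : ∀ p, ∑ q, W p q = 1)
    (hcol : ∀ q, ∑ p, W p q = 1)
    (hdiag : ∀ p, 0 < W p p)
    (hconn : ∀ p q, ∃ m : ℕ, 0 < (W ^ m) p q)
    (i : Fin N)
    (Phits Phi Phif Phit Sig Sigf Sigt : (Fin N → ℝ) → Matrix (Fin n) (Fin n) ℝ)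
    (hPhits : ∀ a, Phits a =
      ∑ j, ((a j) ^ 2 - a j) • ((H j)ᵀ * (Ru j)⁻¹ * R j * (Ru j)⁻¹ * H j))
    (hPhi : ∀ a, Phi a = ∑ j, a j • ((H j)ᵀ * (R j)⁻¹ * H j))
    (hPhif : ∀ a, Phif a = ∑ j, a j • ((H j)ᵀ * (Ru j)⁻¹ * H j))
    (hPhit : ∀ a, Phit a =
      ∑ j, (a j) ^ 2 • ((H j)ᵀ * (Ru j)⁻¹ * R j * (Ru j)⁻¹ * H j))
    (hSig : ∀ a, Sig a = (P⁻¹ + Phi a)⁻¹)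
    (hSigf : ∀ a, Sigf a = (Pf⁻¹ + Phif a)⁻¹)
    (hSigt : ∀ a, Sigt a =
      Sigf a * Pf⁻¹ * P * Pf⁻¹ * Sigf a + Sigf a * Phit a * Sigf a) :
    (∀ a : Fin N → ℝ, (∀ j, 0 ≤ a j) → (Phits a).PosSemidef →
        (Sigt a - Sig a).PosSemidef) ∧
    (∃ ε : ℕ → ℝ, (∀ L, ε L ≤ 0) ∧ Tendsto ε atTop (nhds 0) ∧
      ∀ L : ℕ, 1 ≤ L →
        (Sigt (fun j => (N : ℝ) * (W ^ L) i j) - Sig (fun j => (N : ℝ) * (W ^ L) i j)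
          - ε L • (1 : Matrix (Fin n) (Fin n) ℝ)).PosSemidef) := by
  have hpart1 : ∀ a : Fin N → ℝ, (∀ j, 0 ≤ a j) → (Phits a).PosSemidef →
      (Sigt a - Sig a).PosSemidef := by
    intro a ha hts
    rw [hPhits a] at hts
    rw [hSigt a, hSig a, hSigf a, hPhit a, hPhif a, hPhi a]
    exact part1 H R Ru hR hRu P Pf hP hPf a ha hts
  refine ⟨hpart1, ?_⟩
  -- part 2
  set aseq : ℕ → Fin N → ℝ := fun L j => (N : ℝ) * (W ^ L) i j with haseq
  have hDeq : ∀ a : Fin N → ℝ, Sigt a - Sig a =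
      (((Pf⁻¹ + ∑ j, a j • ((H j)ᵀ * (Ru j)⁻¹ * H j))⁻¹) * Pf⁻¹ * P * Pf⁻¹ *
        ((Pf⁻¹ + ∑ j, a j • ((H j)ᵀ * (Ru j)⁻¹ * H j))⁻¹)
      + ((Pf⁻¹ + ∑ j, a j • ((H j)ᵀ * (Ru j)⁻¹ * H j))⁻¹) *
          (∑ j, (a j) ^ 2 • ((H j)ᵀ * (Ru j)⁻¹ * R j * (Ru j)⁻¹ * H j)) *
          ((Pf⁻¹ + ∑ j, a j • ((H j)ᵀ * (Ru j)⁻¹ * H j))⁻¹)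
      - (P⁻¹ + ∑ j, a j • ((H j)ᵀ * (R j)⁻¹ * H j))⁻¹) := by
    intro a
    rw [hSigt a, hSig a, hSigf a, hPhit a, hPhif a, hPhi a]
  have hermD : ∀ a : Fin N → ℝ, (Sigt a - Sig a).IsHermitian := by
    intro a
    rw [hDeq a]
    exact hermAll H R Ru hR hRu P Pf hP hPf a
  -- D 1 is PSD
  have hone : ∀ j, (0:ℝ) ≤ (fun _ : Fin N => (1:ℝ)) j := fun _ => zero_le_one
  have hts1 : (Phits (fun _ => 1)).PosSemidef := by
    rw [hPhits]
    simp only [one_pow, sub_self, zero_smul, Finset.sum_const_zero]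
    exact Matrix.PosSemidef.zero
  have hD1 : (Sigt (fun _ : Fin N => (1:ℝ)) - Sig (fun _ : Fin N => (1:ℝ))).PosSemidef :=
    hpart1 _ hone hts1
  -- continuity of the explicit expression at the all-ones vector
  have hconv : Tendsto aseq atTop (nhds (fun _ : Fin N => (1:ℝ))) := by
    rw [tendsto_pi_nhds]
    intro j
    exact stoch_conv hN W hnonneg hrow hcol hdiag hconn i j
  have hcS : Continuous (fun a : Fin N → ℝ =>
      Pf⁻¹ + ∑ j, a j • ((H j)ᵀ * (Ru j)⁻¹ * H j)) :=
    continuous_const.add (continuous_finset_sum _ fun j _ =>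
      (continuous_apply j).smul continuous_const)
  have hcT : Continuous (fun a : Fin N → ℝ =>
      P⁻¹ + ∑ j, a j • ((H j)ᵀ * (R j)⁻¹ * H j)) :=
    continuous_const.add (continuous_finset_sum _ fun j _ =>
      (continuous_apply j).smul continuous_const)
  have hcMt : Continuous (fun a : Fin N → ℝ =>
      ∑ j, (a j) ^ 2 • ((H j)ᵀ * (Ru j)⁻¹ * R j * (Ru j)⁻¹ * H j)) :=
    continuous_finset_sum _ fun j _ => ((continuous_apply j).pow 2).smul continuous_const
  have hpsdF : ∀ (b : Fin N → ℝ), (∀ j, 0 ≤ b j) →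
      (Pf⁻¹ + ∑ j, b j • ((H j)ᵀ * (Ru j)⁻¹ * H j)).PosDef := by
    intro b hb
    refine hPf.inv.add_posSemidef (psd_sum _ fun j => psd_smul (hb j) ?_)
    have := ((hRu j).inv.posSemidef).conjTranspose_mul_mul_same (H j)
    rwa [rct] at this
  have hpsdG : ∀ (b : Fin N → ℝ), (∀ j, 0 ≤ b j) →
      (P⁻¹ + ∑ j, b j • ((H j)ᵀ * (R j)⁻¹ * H j)).PosDef := by
    intro b hb
    refine hP.inv.add_posSemidef (psd_sum _ fun j => psd_smul (hb j) ?_)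
    have := ((hR j).inv.posSemidef).conjTranspose_mul_mul_same (H j)
    rwa [rct] at this
  have hdetS : IsUnit (Pf⁻¹ + ∑ j, (fun _ : Fin N => (1:ℝ)) j •
      ((H j)ᵀ * (Ru j)⁻¹ * H j)).det :=
    (Matrix.isUnit_iff_isUnit_det _).mp (hpsdF _ hone).isUnit
  have hdetT : IsUnit (P⁻¹ + ∑ j, (fun _ : Fin N => (1:ℝ)) j •
      ((H j)ᵀ * (R j)⁻¹ * H j)).det :=
    (Matrix.isUnit_iff_isUnit_det _).mp (hpsdG _ hone).isUnit
  have hcSinv : ContinuousAt (fun a : Fin N → ℝ =>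
      (Pf⁻¹ + ∑ j, a j • ((H j)ᵀ * (Ru j)⁻¹ * H j))⁻¹) (fun _ => (1:ℝ)) :=
    ContinuousAt.comp
      (continuousAt_matrix_inv _ (NormedRing.inverse_continuousAt hdetS.unit))
      hcS.continuousAt
  have hcTinv : ContinuousAt (fun a : Fin N → ℝ =>
      (P⁻¹ + ∑ j, a j • ((H j)ᵀ * (R j)⁻¹ * H j))⁻¹) (fun _ => (1:ℝ)) :=
    ContinuousAt.comp
      (continuousAt_matrix_inv _ (NormedRing.inverse_continuousAt hdetT.unit))
      hcT.continuousAt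
  have hcD : ContinuousAt (fun a : Fin N → ℝ => Sigt a - Sig a) (fun _ => (1:ℝ)) := by
    have : (fun a : Fin N → ℝ => Sigt a - Sig a) = fun a : Fin N → ℝ =>
      (((Pf⁻¹ + ∑ j, a j • ((H j)ᵀ * (Ru j)⁻¹ * H j))⁻¹) * Pf⁻¹ * P * Pf⁻¹ *
        ((Pf⁻¹ + ∑ j, a j • ((H j)ᵀ * (Ru j)⁻¹ * H j))⁻¹)
      + ((Pf⁻¹ + ∑ j, a j • ((H j)ᵀ * (Ru j)⁻¹ * H j))⁻¹) *
          (∑ j, (a j) ^ 2 • ((H j)ᵀ * (Ru j)⁻¹ * R j * (Ru j)⁻¹ * H j)) *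
          ((Pf⁻¹ + ∑ j, a j • ((H j)ᵀ * (Ru j)⁻¹ * H j))⁻¹)
      - (P⁻¹ + ∑ j, a j • ((H j)ᵀ * (R j)⁻¹ * H j))⁻¹) := funext hDeq
    rw [this]
    exact ((((hcSinv.mul continuousAt_const).mul continuousAt_const).mul
      continuousAt_const).mul hcSinv).add
      ((hcSinv.mul hcMt.continuousAt).mul hcSinv) |>.sub hcTinv
  have hlim : Tendsto (fun L => Sigt (aseq L) - Sig (aseq L)) atTop
      (nhds (Sigt (fun _ : Fin N => (1:ℝ)) - Sig (fun _ : Fin N => (1:ℝ)))) :=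
    hcD.tendsto.comp hconv
  -- the perturbation and epsilon
  set Δ : ℕ → Matrix (Fin n) (Fin n) ℝ := fun L =>
    (Sigt (aseq L) - Sig (aseq L)) -
      (Sigt (fun _ : Fin N => (1:ℝ)) - Sig (fun _ : Fin N => (1:ℝ))) with hΔdef
  refine ⟨fun L => -(∑ p, ∑ q, |Δ L p q|), ?_, ?_, ?_⟩
  · intro L
    refine neg_nonpos.mpr (Finset.sum_nonneg fun p _ => Finset.sum_nonneg fun q _ =>
      abs_nonneg _)
  · have hentry : ∀ p q, Tendsto (fun L => Δ L p q) atTop (nhds 0) := by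
      intro p q
      have h1 := tendsto_pi_nhds.mp (tendsto_pi_nhds.mp hlim p) q
      have h2 := h1.sub (tendsto_const_nhds : Tendsto
        (fun _ : ℕ => (Sigt (fun _ : Fin N => (1:ℝ)) - Sig (fun _ : Fin N => (1:ℝ))) p q)
        atTop (nhds ((Sigt (fun _ : Fin N => (1:ℝ)) - Sig (fun _ : Fin N => (1:ℝ))) p q)))
      rw [sub_self] at h2
      exact h2
    have habs : ∀ p q, Tendsto (fun L => |Δ L p q|) atTop (nhds 0) := by
      intro p q
      have h3 := (hentry p q).abs
      rwa [abs_zero] at h3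
    have hsum : Tendsto (fun L => ∑ p, ∑ q, |Δ L p q|) atTop (nhds 0) := by
      have := tendsto_finset_sum (Finset.univ : Finset (Fin n))
        (fun p _ => tendsto_finset_sum (Finset.univ : Finset (Fin n))
          (fun q _ => habs p q))
      simp only [Finset.sum_const_zero] at this
      exact this
    have h4 := hsum.neg
    rwa [neg_zero] at h4
  · intro L _
    have hkey : Sigt (aseq L) - Sig (aseq L) - (-(∑ p, ∑ q, |Δ L p q|)) •
        (1 : Matrix (Fin n) (Fin n) ℝ) =
        (Sigt (fun _ : Fin N => (1:ℝ)) - Sig (fun _ : Fin N => (1:ℝ))) + Δ L +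
          (∑ p, ∑ q, |Δ L p q|) • (1 : Matrix (Fin n) (Fin n) ℝ) := by
      have hΔL : Δ L = (Sigt (aseq L) - Sig (aseq L)) -
          (Sigt (fun _ : Fin N => (1:ℝ)) - Sig (fun _ : Fin N => (1:ℝ))) := rfl
      rw [neg_smul, sub_neg_eq_add, hΔL]
      abel
    have hhermΔ : (Δ L).IsHermitian := (hermD (aseq L)).sub (hermD _)
    rw [show (fun j => (N : ℝ) * (W ^ L) i j) = aseq L from rfl, hkey]
    exact psd_of_close _ _ hD1 hhermΔ
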